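/- Let X be a separable topological group having a countable Pytkeev network at its identity element. Then X has a countable Pytkeev network. -/

import Mathlib

open Set Filter Topology TopologicalSpace

/-- A set `A` accumulates at `x` if every neighborhood of `x` contains
infinitely many points of `A`. -/
def AccumulatesAt {X : Type*} [TopologicalSpace X] (A : Set X) (x : X) : Prop :=
  ∀ U ∈ 𝓝 x, (U ∩ A).Infinite

/-- `𝒩` is a network: for each point and open neighborhood there is a member of `𝒩`
containing the point and contained in the neighborhood. -/
def IsNetwork {X : Type*} [TopologicalSpace X] (𝒩 : Set (Set X)) : Prop :=
  ∀ (x : X) (U : Set X), IsOpen U → x ∈ U → ∃ N ∈ 𝒩, x ∈ N ∧ N ⊆ U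

/-- `𝒩` is a Pytkeev network. -/
def IsPytkeevNetwork {X : Type*} [TopologicalSpace X] (𝒩 : Set (Set X)) : Prop :=
  IsNetwork 𝒩 ∧ ∀ (x : X) (U : Set X), IsOpen U → x ∈ U →
    ∀ A : Set X, AccumulatesAt A x → ∃ N ∈ 𝒩, N ⊆ U ∧ (N ∩ A).Infinite

/-- `𝒩` is a k-network. -/
def IsKNetwork {X : Type*} [TopologicalSpace X] (𝒩 : Set (Set X)) : Prop :=
  ∀ (U K : Set X), IsOpen U → IsCompact K → K ⊆ U →
    ∃ F ⊆ 𝒩, F.Finite ∧ K ⊆ ⋃₀ F ∧ ⋃₀ F ⊆ U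

/-- `𝒩` is a network at the point `x`. -/
def IsNetworkAt {X : Type*} [TopologicalSpace X] (𝒩 : Set (Set X)) (x : X) : Prop :=
  ∀ U : Set X, IsOpen U → x ∈ U → ∃ N ∈ 𝒩, x ∈ N ∧ N ⊆ U

/-- `𝒩` is a Pytkeev network at the point `x`. -/
def IsPytkeevNetworkAt {X : Type*} [TopologicalSpace X] (𝒩 : Set (Set X)) (x : X) : Prop :=
  IsNetworkAt 𝒩 x ∧ ∀ U : Set X, IsOpen U → x ∈ U →
    ∀ A : Set X, AccumulatesAt A x → ∃ N ∈ 𝒩, N ⊆ U ∧ (N ∩ A).Infinite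

section Aux

open Pointwise

variable {G : Type*} [Group G] [TopologicalSpace G] [IsTopologicalGroup G]

private lemma PG.H_inv {h : G} (hh : h ∈ closure ({1} : Set G)) :
    h⁻¹ ∈ closure ({1} : Set G) := by
  have hc : ((⊥ : Subgroup G).topologicalClosure : Set G) = closure {1} := by
    simp [Subgroup.topologicalClosure]
  rw [← hc] at hh ⊢
  exact inv_mem hh

private lemma PG.H_mul {h h' : G} (hh : h ∈ closure ({1} : Set G))
    (hh' : h' ∈ closure ({1} : Set G)) : h * h' ∈ closure ({1} : Set G) := by
  have hc : ((⊥ : Subgroup G).topologicalClosure : Set G) = closure {1} := by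
    simp [Subgroup.topologicalClosure]
  rw [← hc] at hh hh' ⊢
  exact mul_mem hh hh'

private lemma PG.H_one : (1 : G) ∈ closure ({1} : Set G) :=
  subset_closure rfl

private lemma PG.H_conj {h : G} (g : G) (hh : h ∈ closure ({1} : Set G)) :
    g⁻¹ * h * g ∈ closure ({1} : Set G) := by
  have hc : Continuous (fun z : G => g⁻¹ * z * g) := by fun_prop
  have := (image_closure_subset_closure_image hc) (mem_image_of_mem _ hh)
  simpa using this

/-- Multiplying by an element of the closure of `{1}` keeps a point inside an open set. -/
private lemma PG.mul_H_mem_open {U : Set G} (hU : IsOpen U) {u h : G} (hu : u ∈ U)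
    (hh : h ∈ closure ({1} : Set G)) : u * h ∈ U := by
  have h1 : u ∈ closure {u * h} := by
    have : u ∈ (u * h) • closure ({1} : Set G) :=
      ⟨h⁻¹, PG.H_inv hh, by simp [smul_eq_mul, mul_assoc]⟩
    rwa [← closure_smul, smul_set_singleton, smul_eq_mul, mul_one] at this
  rcases (mem_closure_iff.mp h1) U hU hu with ⟨z, hzU, hz⟩
  simp only [mem_singleton_iff] at hz
  rwa [← hz]

private lemma PG.acc_smul (g : G) {A : Set G} {x : G} (h : AccumulatesAt A x) :
    AccumulatesAt (g • A) (g * x) := by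
  intro U hU
  have hmap : Filter.map (fun z : G => g * z) (𝓝 x) = 𝓝 (g * x) :=
    (Homeomorph.mulLeft g).map_nhds_eq x
  have hpre : (fun z : G => g * z) ⁻¹' U ∈ 𝓝 x := by
    rw [← hmap] at hU; exact hU
  have hsub : (fun z : G => g * z) '' ((fun z : G => g * z) ⁻¹' U ∩ A) ⊆ U ∩ g • A := by
    rintro _ ⟨z, ⟨hz1, hz2⟩, rfl⟩
    exact ⟨hz1, ⟨z, hz2, rfl⟩⟩
  exact ((h _ hpre).image ((mul_right_injective g).injOn)).mono hsub

/-- From a point of the closure of `{y}` one can get back: the neighborhood filters agree. -/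
private lemma PG.nhds_eq_of_H {x y h₀ : G} (hh₀ : h₀ ∈ closure ({1} : Set G))
    (hxy : x = y * h₀) : 𝓝 x = 𝓝 y := by
  have h1 : x ∈ closure {y} := by
    have : x ∈ y • closure ({1} : Set G) := ⟨h₀, hh₀, hxy.symm⟩
    rwa [← closure_smul, smul_set_singleton, smul_eq_mul, mul_one] at this
  have h2 : y ∈ closure {x} := by
    have : y ∈ x • closure ({1} : Set G) :=
      ⟨h₀⁻¹, PG.H_inv hh₀, by simp [smul_eq_mul, hxy, mul_assoc]⟩
    rwa [← closure_smul, smul_set_singleton, smul_eq_mul, mul_one] at this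
  exact le_antisymm (specializes_iff_mem_closure.2 h2) (specializes_iff_mem_closure.2 h1)

/-- A symmetric open neighborhood `V` of `1` with `x * (V*V*V) ⊆ U`. -/
private lemma PG.exists_symm_nhds {x : G} {U : Set G} (hU : IsOpen U) (hx : x ∈ U) :
    ∃ V : Set G, IsOpen V ∧ (1 : G) ∈ V ∧ (∀ v ∈ V, v⁻¹ ∈ V) ∧
      ∀ w ∈ V * V * V, x * w ∈ U := by
  have hW : (fun z : G => x * z) ⁻¹' U ∈ 𝓝 1 := by
    refine IsOpen.mem_nhds (hU.preimage (by fun_prop)) ?_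
    simp [hx]
  obtain ⟨V₁, hV₁o, hV₁1, hV₁⟩ := exists_open_nhds_one_mul_subset hW
  obtain ⟨V₂, hV₂o, hV₂1, hV₂⟩ := exists_open_nhds_one_mul_subset (hV₁o.mem_nhds hV₁1)
  refine ⟨V₂ ∩ V₂⁻¹, hV₂o.inter hV₂o.inv, ⟨hV₂1, by simp [hV₂1]⟩, ?_, ?_⟩
  · rintro v ⟨hv1, hv2⟩
    exact ⟨by simpa using hv2, by simpa using hv1⟩
  · rintro w hw
    rcases hw with ⟨uv, huv, v₃, hv₃, rfl⟩
    rcases huv with ⟨v₁, hv₁, v₂, hv₂m, rfl⟩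
    have h12 : v₁ * v₂ ∈ V₁ := hV₂ (Set.mul_mem_mul hv₁.1 hv₂m.1)
    have h3 : v₃ ∈ V₁ := by
      have := hV₂ (Set.mul_mem_mul hv₃.1 hV₂1)
      simpa using this
    exact hV₁ (Set.mul_mem_mul h12 h3)

private lemma PG.mem_MNH {M N : Set G} {d a b c : G} (ha : a ∈ M) (hb : b ∈ N)
    (hc : c ∈ closure ({1} : Set G)) :
    d * (a⁻¹ * b * c) ∈ d • (M⁻¹ * N * closure ({1} : Set G)) :=
  ⟨a⁻¹ * b * c, Set.mul_mem_mul (Set.mul_mem_mul (Set.inv_mem_inv.2 ha) hb) hc, rfl⟩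

/-- The master lemma: under the selection hypothesis, translated sets
`d • (M⁻¹ * N * closure {1})` provide a Pytkeev network at `x`. -/
private lemma PG.master {P : Set (Set G)} (hP : IsPytkeevNetworkAt P (1 : G))
    {D : Set G} {x : G}
    (hsel : ∀ V : Set G, IsOpen V → (1 : G) ∈ V →
      ∃ d ∈ D, ∃ M ∈ P, M ⊆ V ∧ ∃ m₀ ∈ M, ∃ h₀ ∈ closure ({1} : Set G),
        x = d * m₀⁻¹ * h₀)
    {U : Set G} (hU : IsOpen U) (hxU : x ∈ U) :
    (∃ d ∈ D, ∃ M ∈ P, ∃ N ∈ P,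
        x ∈ d • (M⁻¹ * N * closure ({1} : Set G)) ∧
        d • (M⁻¹ * N * closure ({1} : Set G)) ⊆ U) ∧
    (∀ A : Set G, AccumulatesAt A x → ∃ d ∈ D, ∃ M ∈ P, ∃ N ∈ P,
        d • (M⁻¹ * N * closure ({1} : Set G)) ⊆ U ∧
        ((d • (M⁻¹ * N * closure ({1} : Set G))) ∩ A).Infinite) := by
  obtain ⟨V, hVo, hV1, hVsym, hVU⟩ := PG.exists_symm_nhds hU hxU
  obtain ⟨d, hdD, M, hMP, hMV, m₀, hm₀M, h₀, hh₀, hxeq⟩ := hsel V hVo hV1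
  have hd : d = x * h₀⁻¹ * m₀ := by rw [hxeq]; group
  -- the common subset estimate
  have hsub : ∀ N : Set G, N ⊆ V →
      d • (M⁻¹ * N * closure ({1} : Set G)) ⊆ U := by
    intro N hNV c hc
    rcases hc with ⟨z, hz, rfl⟩
    rcases hz with ⟨ab, hab, h, hh, rfl⟩
    rcases hab with ⟨a, haM, n, hnN, rfl⟩
    rcases Set.mem_inv.1 haM with hm
    -- a ∈ M⁻¹ means a⁻¹ ∈ M
    set w : G := m₀ * a * n with hw
    have hwV : w ∈ V * V * V := by
      refine Set.mul_mem_mul (Set.mul_mem_mul (hMV hm₀M) ?_) (hNV hnN)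
      have : (a⁻¹)⁻¹ ∈ V := by simpa using hVsym _ (hMV hm)
      simpa using this
    have hxwU : x * w ∈ U := hVU w hwV
    have hcalc : d * (a * n * h) = (x * w) * ((w⁻¹ * h₀⁻¹ * w) * h) := by
      rw [hd, hw]; group
    show d * (a * n * h) ∈ U
    rw [hcalc]
    exact PG.mul_H_mem_open hU hxwU (PG.H_mul (PG.H_conj w (PG.H_inv hh₀)) hh)
  constructor
  · -- network part
    obtain ⟨N, hNP, h1N, hNV⟩ := hP.1 V hVo hV1
    refine ⟨d, hdD, M, hMP, N, hNP, ?_, hsub N hNV⟩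
    have : d * (m₀⁻¹ * 1 * h₀) ∈ d • (M⁻¹ * N * closure ({1} : Set G)) :=
      PG.mem_MNH hm₀M h1N hh₀
    simpa [hxeq, mul_one, mul_assoc] using this
  · -- Pytkeev part
    intro A hA
    set y : G := d * m₀⁻¹ with hy
    have hxy : x = y * h₀ := by rw [hy, hxeq]
    have hnhds : 𝓝 x = 𝓝 y := PG.nhds_eq_of_H hh₀ hxy
    have hAy : AccumulatesAt A y := by
      intro W hW; exact hA W (by rwa [hnhds])
    have hacc1 : AccumulatesAt (y⁻¹ • A) 1 := by
      have := PG.acc_smul y⁻¹ hAy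
      rwa [inv_mul_cancel] at this
    obtain ⟨N, hNP, hNV, hNinf⟩ := hP.2 V hVo hV1 (y⁻¹ • A) hacc1
    refine ⟨d, hdD, M, hMP, N, hNP, hsub N hNV, ?_⟩
    have himg : (fun n : G => y * n) '' (N ∩ y⁻¹ • A) ⊆
        (d • (M⁻¹ * N * closure ({1} : Set G))) ∩ A := by
      rintro _ ⟨n, ⟨hnN, hnA⟩, rfl⟩
      constructor
      · show y * n ∈ d • (M⁻¹ * N * closure ({1} : Set G))
        have : d * (m₀⁻¹ * n * 1) ∈ d • (M⁻¹ * N * closure ({1} : Set G)) :=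
          PG.mem_MNH hm₀M hnN PG.H_one
        simpa [hy, mul_one, mul_assoc] using this
      · show y * n ∈ A
        rcases hnA with ⟨a, haA, ha⟩
        have hyn : y * n = a := by rw [← ha]; simp [smul_eq_mul, mul_assoc]
        rwa [hyn]
    exact ((hNinf.image ((mul_right_injective y).injOn)).mono himg)

end Aux

/-- A separable topological group with a countable Pytkeev network at the identity
has a countable Pytkeev network. -/
theorem separableGroup_countable_pytkeevNetwork {G : Type*} [Group G] [TopologicalSpace G]
    [IsTopologicalGroup G] [SeparableSpace G]
    (hpyt : ∃ Pnet : Set (Set G), Pnet.Countable ∧ IsPytkeevNetworkAt Pnet (1 : G)) :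
    ∃ 𝒩 : Set (Set G), 𝒩.Countable ∧ IsPytkeevNetwork 𝒩 := by
  classical
  obtain ⟨P, hPc, hP⟩ := hpyt
  obtain ⟨D, hDc, hDd⟩ := exists_countable_dense G
  open Pointwise in
  show ∃ 𝒩 : Set (Set G), 𝒩.Countable ∧ IsPytkeevNetwork 𝒩
  have hsel : ∀ x : G, ∀ V : Set G, IsOpen V → (1 : G) ∈ V →
      ∃ d ∈ D, ∃ M ∈ P, M ⊆ V ∧ ∃ m₀ ∈ M, ∃ h₀ ∈ closure ({1} : Set G),
        x = d * m₀⁻¹ * h₀ := by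
    intro x
    by_cases hacc : AccumulatesAt D x
    · intro V hVo hV1
      have h1 : AccumulatesAt (x⁻¹ • D) 1 := by
        have := PG.acc_smul x⁻¹ hacc
        rwa [inv_mul_cancel] at this
      obtain ⟨M, hMP, hMV, hinf⟩ := hP.2 V hVo hV1 _ h1
      obtain ⟨p, hpM, hpD⟩ := hinf.nonempty
      rcases hpD with ⟨e, heD, he⟩
      refine ⟨e, heD, M, hMP, hMV, p, hpM, 1, PG.H_one, ?_⟩
      rw [← he]; simp only [smul_eq_mul]; group
    · rw [AccumulatesAt] at hacc; push_neg at hacc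
      obtain ⟨U₀, hU₀, hfin'⟩ := hacc
      have hxO : x ∈ interior U₀ := mem_interior_iff_mem_nhds.2 hU₀
      have hfin : (interior U₀ ∩ D).Finite :=
        hfin'.subset (inter_subset_inter_left _ interior_subset)
      have hxcl : x ∈ closure (interior U₀ ∩ D) :=
        hDd.open_subset_closure_inter isOpen_interior hxO
      obtain ⟨d, hdOD, hxd⟩ : ∃ d ∈ interior U₀ ∩ D, x ∈ closure {d} := by
        have h1 : closure (⋃ e ∈ interior U₀ ∩ D, ({e} : Set G)) =
            ⋃ e ∈ interior U₀ ∩ D, closure ({e} : Set G) := hfin.closure_biUnion _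
        rw [← biUnion_of_singleton (interior U₀ ∩ D), h1] at hxcl
        simpa using hxcl
      have hxdH : x ∈ d • closure ({1} : Set G) := by
        rw [← closure_smul, smul_set_singleton, smul_eq_mul, mul_one]
        exact hxd
      obtain ⟨h₀, hh₀, hdh⟩ := hxdH
      intro V hVo hV1
      obtain ⟨M, hMP, h1M, hMV⟩ := hP.1 V hVo hV1
      refine ⟨d, hdOD.2, M, hMP, hMV, 1, h1M, h₀, hh₀, ?_⟩
      rw [← hdh]; simp [smul_eq_mul]
  refine ⟨⋃ d ∈ D, ⋃ M ∈ P, ⋃ N ∈ P, {d • (M⁻¹ * N * closure ({1} : Set G))}, ?_, ?_, ?_⟩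
  · exact hDc.biUnion fun d _ => hPc.biUnion fun M _ => hPc.biUnion fun N _ =>
      countable_singleton _
  · intro x U hU hxU
    obtain ⟨d, hdD, M, hMP, N, hNP, hx, hs⟩ := (PG.master hP (hsel x) hU hxU).1
    refine ⟨_, ?_, hx, hs⟩
    simp only [mem_iUnion, mem_singleton_iff]
    exact ⟨d, hdD, M, hMP, N, hNP, rfl⟩
  · intro x U hU hxU A hA
    obtain ⟨d, hdD, M, hMP, N, hNP, hs, hinf⟩ := (PG.master hP (hsel x) hU hxU).2 A hA
    refine ⟨_, ?_, hs, hinf⟩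
    simp only [mem_iUnion, mem_singleton_iff]
    exact ⟨d, hdD, M, hMP, N, hNP, rfl⟩
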